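/- Let K ≻ 0 be an m×m real matrix and λ > 0. The function g(X) = -log det(X) + log det(I_m + X/m) + λ Tr(K^{-1} X), defined on positive definite X, has X_⋆ = (1/2)((m² I_m + (4m/λ)K)^{1/2} − m I_m) as a critical point: at X_⋆ one has X_⋆^{-1} = (X_⋆ + m I_m)^{-1} + λ K^{-1}. -/

import Mathlib

open Matrix

/-- The closed-form matrix `X⋆ = (1/2)((m² I + (4m/λ)K)^{1/2} − m I)` is a
critical point of `g(X) = -log det X + log det(I + X/m) + λ Tr(K⁻¹ X)`:
it satisfies the first-order condition `X⋆⁻¹ = (X⋆ + m I)⁻¹ + λ K⁻¹`. -/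
theorem first_order_condition_closed_form {m : ℕ} (hm : 0 < m)
    (K S : Matrix (Fin m) (Fin m) ℝ) (hK : K.PosDef) (l : ℝ) (hl : 0 < l)
    (hS : S.PosSemidef)
    (hSsq : S * S = ((m : ℝ) ^ 2) • (1 : Matrix (Fin m) (Fin m) ℝ) + (4 * m / l) • K) :
    letI X : Matrix (Fin m) (Fin m) ℝ := (1 / 2 : ℝ) • (S - (m : ℝ) • 1)
    X⁻¹ = (X + (m : ℝ) • 1)⁻¹ + l • K⁻¹ := by
  have hm' : (m : ℝ) ≠ 0 := Nat.cast_ne_zero.mpr hm.ne'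
  have hl' : l ≠ 0 := hl.ne'
  have hKinv : K * K⁻¹ = 1 := Matrix.mul_nonsing_inv K (isUnit_iff_ne_zero.mpr hK.det_pos.ne')
  have expand : (S - (m : ℝ) • 1) * (S + (m : ℝ) • 1)
      = (4 * (m : ℝ) / l) • K := by
    rw [sub_mul, mul_add, mul_add, Matrix.smul_mul, Matrix.mul_smul, one_mul, mul_one,
      hSsq]
    rw [show ((m:ℝ) • (1 : Matrix (Fin m) (Fin m) ℝ)) * ((m:ℝ) • 1) = ((m:ℝ)^2) • 1 by
      rw [Matrix.smul_mul, Matrix.mul_smul, one_mul, smul_smul]; ring_nf]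
    abel
  have expand' : (S + (m : ℝ) • 1) * (S - (m : ℝ) • 1)
      = (4 * (m : ℝ) / l) • K := by
    rw [add_mul, mul_sub, mul_sub, Matrix.smul_mul, Matrix.mul_smul, one_mul, mul_one,
      hSsq]
    rw [show ((m:ℝ) • (1 : Matrix (Fin m) (Fin m) ℝ)) * ((m:ℝ) • 1) = ((m:ℝ)^2) • 1 by
      rw [Matrix.smul_mul, Matrix.mul_smul, one_mul, smul_smul]; ring_nf]
    abel
  have hXinv : ((1 / 2 : ℝ) • (S - (m : ℝ) • 1))⁻¹
      = (l / (2 * m)) • ((S + (m : ℝ) • 1) * K⁻¹) := by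
    apply Matrix.inv_eq_right_inv
    rw [Matrix.smul_mul, Matrix.mul_smul, smul_smul, ← Matrix.mul_assoc, expand,
      Matrix.smul_mul, smul_smul, hKinv]
    rw [show (1 / 2 : ℝ) * (l / (2 * m)) * (4 * (m : ℝ) / l) = 1 by field_simp; ring]
    simp
  have hYinv : ((1 / 2 : ℝ) • (S - (m : ℝ) • 1) + (m : ℝ) • 1)⁻¹
      = (l / (2 * m)) • ((S - (m : ℝ) • 1) * K⁻¹) := by
    have hY : (1 / 2 : ℝ) • (S - (m : ℝ) • 1) + (m : ℝ) • 1
        = (1 / 2 : ℝ) • (S + (m : ℝ) • 1) := by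
      module
    rw [hY]
    apply Matrix.inv_eq_right_inv
    rw [Matrix.smul_mul, Matrix.mul_smul, smul_smul, ← Matrix.mul_assoc, expand',
      Matrix.smul_mul, smul_smul, hKinv]
    rw [show (1 / 2 : ℝ) * (l / (2 * m)) * (4 * (m : ℝ) / l) = 1 by field_simp; ring]
    simp
  simp only [hXinv, hYinv]
  rw [add_mul, sub_mul, Matrix.smul_mul, smul_add, smul_sub, smul_smul]
  rw [show l / (2 * (m : ℝ)) * m = l / 2 by field_simp]
  rw [show l • K⁻¹ = (l / 2) • ((1 : Matrix (Fin m) (Fin m) ℝ) * K⁻¹)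
      + (l / 2) • ((1 : Matrix (Fin m) (Fin m) ℝ) * K⁻¹) by rw [one_mul, ← add_smul]; ring_nf]
  abel
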